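/- arXiv:1902.08372 — 2 statements merged into one kernel-verified Lean document; each statement's English description precedes it below -/
import Mathlib

section
/- Let X be a compact Hausdorff space, μ a deficient topological measure on X with μ(X) < ∞, and g a continuous real-valued function on X with g(X) ⊆ [a,b]. For closed F define ν_g(F) = aμ(F) + ∫_a^b μ(F ∩ g⁻¹([t,∞))) dt and for open U define ν_g(U) = aμ(U) + ∫_a^b μ(U ∩ g⁻¹((t,∞))) dt. Then: (1) ν_g(C ⊔ K) = ν_g(C) + ν_g(K) for disjoint closed sets C, K; (2) for every open U, ν_g(U) is the limit of the net (ν_g(K)) over compact K ⊆ U directed by inclusion; (3) for every closed F, ν_g(F) is the limit of the net (ν_g(V)) over open V ⊇ F directed by reverse inclusion; (4) |ν_g(F)| ≤ ‖g‖_∞ · μ(X) for every closed set F. In other words, ν_g is a signed deficient topological measure with norm at most ‖g‖_∞ μ(X). -/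
open MeasureTheory Set Filter Topology ENNReal

set_option linter.unusedSectionVars false
set_option maxHeartbeats 1000000

/-- A deficient topological measure on a topological space `X`: a set function with values in
`[0,∞]` (recorded on all sets, but constrained only on open and closed sets) that is finitely
additive on disjoint compact sets, inner regular on open sets with respect to compact sets,
and outer regular on closed sets with respect to open sets. -/
structure DeficientTopologicalMeasure (X : Type*) [TopologicalSpace X] where
  m : Set X → ℝ≥0∞
  additive : ∀ ⦃C K : Set X⦄, IsCompact C → IsCompact K → Disjoint C K →
    m (C ∪ K) = m C + m K
  innerRegular : ∀ ⦃U : Set X⦄, IsOpen U →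
    m U = ⨆ (K : Set X) (_ : IsCompact K) (_ : K ⊆ U), m K
  outerRegular : ∀ ⦃F : Set X⦄, IsClosed F →
    m F = ⨅ (U : Set X) (_ : IsOpen U) (_ : F ⊆ U), m U

namespace DTMaux

variable {X : Type*} [TopologicalSpace X] [CompactSpace X] [T2Space X]
  (μ : DeficientTopologicalMeasure X)

lemma mono_co {K U : Set X} (hK : IsCompact K) (hU : IsOpen U) (h : K ⊆ U) :
    μ.m K ≤ μ.m U := by
  rw [μ.innerRegular hU]
  exact le_iSup_of_le K (le_iSup_of_le hK (le_iSup_of_le h le_rfl))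

lemma mono_cc {K F : Set X} (hK : IsClosed K) (hF : IsClosed F) (h : K ⊆ F) :
    μ.m K ≤ μ.m F := by
  rw [μ.outerRegular hF]
  exact le_iInf fun U => le_iInf fun hU => le_iInf fun hFU =>
    mono_co μ hK.isCompact hU (h.trans hFU)

lemma mono_oo {U V : Set X} (hU : IsOpen U) (hV : IsOpen V) (h : U ⊆ V) :
    μ.m U ≤ μ.m V := by
  rw [μ.innerRegular hU]
  exact iSup_le fun K => iSup_le fun hK => iSup_le fun hKU =>
    mono_co μ hK hV (hKU.trans h)

lemma mono_oc {U F : Set X} (hU : IsOpen U) (hF : IsClosed F) (h : U ⊆ F) :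
    μ.m U ≤ μ.m F := by
  rw [μ.innerRegular hU]
  exact iSup_le fun K => iSup_le fun hK => iSup_le fun hKU =>
    mono_cc μ hK.isClosed hF (hKU.trans h)

lemma closed_ne_top (hμfin : μ.m univ < ∞) {F : Set X} (hF : IsClosed F) : μ.m F ≠ ∞ :=
  ((mono_cc μ hF isClosed_univ (subset_univ F)).trans_lt hμfin).ne

lemma open_ne_top (hμfin : μ.m univ < ∞) {U : Set X} (hU : IsOpen U) : μ.m U ≠ ∞ :=
  ((mono_oc μ hU isClosed_univ (subset_univ U)).trans_lt hμfin).ne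

lemma empty_eq_zero (hμfin : μ.m univ < ∞) : μ.m ∅ = 0 := by
  have h := μ.additive isCompact_empty isCompact_empty (disjoint_bot_left)
  rw [union_empty] at h
  have hne := closed_ne_top μ hμfin isClosed_empty
  nth_rewrite 1 [← add_zero (μ.m ∅)] at h
  exact ((ENNReal.add_right_inj hne).mp h).symm

lemma exists_compact_approx (hμfin : μ.m univ < ∞) {V : Set X} (hV : IsOpen V) {ε : ℝ} (hε : 0 < ε) :
    ∃ K, IsCompact K ∧ K ⊆ V ∧ (μ.m V).toReal - ε < (μ.m K).toReal := by
  rcases lt_or_ge ((μ.m V).toReal - ε) 0 with h0 | h0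
  · exact ⟨∅, isCompact_empty, empty_subset V, h0.trans_le ENNReal.toReal_nonneg⟩
  · have hfin := open_ne_top μ hμfin hV
    have h1 : ENNReal.ofReal ((μ.m V).toReal - ε) < μ.m V := by
      rw [ENNReal.ofReal_lt_iff_lt_toReal h0 hfin]
      linarith
    have h2 := h1.trans_le (le_of_eq (μ.innerRegular hV))
    simp only [lt_iSup_iff] at h2
    obtain ⟨K, hK, hKV, hlt⟩ := h2
    have hKfin : μ.m K ≠ ∞ := ((mono_co μ hK hV hKV).trans_lt hfin.lt_top).ne
    exact ⟨K, hK, hKV, (ENNReal.ofReal_lt_iff_lt_toReal h0 hKfin).mp hlt⟩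

lemma exists_open_approx (hμfin : μ.m univ < ∞) {F : Set X} (hF : IsClosed F) {ε : ℝ} (hε : 0 < ε) :
    ∃ W, IsOpen W ∧ F ⊆ W ∧ (μ.m W).toReal < (μ.m F).toReal + ε := by
  have hfin := closed_ne_top μ hμfin hF
  have h1 : μ.m F < μ.m F + ENNReal.ofReal ε :=
    ENNReal.lt_add_right hfin (ENNReal.ofReal_pos.mpr hε).ne'
  have h2 := lt_of_le_of_lt (le_of_eq (μ.outerRegular hF).symm) h1
  simp only [iInf_lt_iff] at h2
  obtain ⟨W, hW, hFW, hlt⟩ := h2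
  refine ⟨W, hW, hFW, ?_⟩
  have := (ENNReal.toReal_lt_toReal (ne_top_of_lt hlt)
    (by simp [hfin])).mpr hlt
  rwa [ENNReal.toReal_add hfin ENNReal.ofReal_ne_top, ENNReal.toReal_ofReal hε.le] at this



/-- closed-type integrand -/
noncomputable def fc (μ : DeficientTopologicalMeasure X) (g : X → ℝ) (F : Set X) (t : ℝ) : ℝ :=
  (μ.m (F ∩ g ⁻¹' (Ici t))).toReal

/-- open-type integrand -/
noncomputable def fo (μ : DeficientTopologicalMeasure X) (g : X → ℝ) (V : Set X) (t : ℝ) : ℝ :=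
  (μ.m (V ∩ g ⁻¹' (Ioi t))).toReal

variable {g : X → ℝ}

lemma fc_closed (hg : Continuous g) {F : Set X} (hF : IsClosed F) (t : ℝ) :
    IsClosed (F ∩ g ⁻¹' (Ici t)) := hF.inter (isClosed_Ici.preimage hg)

lemma fo_open (hg : Continuous g) {V : Set X} (hV : IsOpen V) (t : ℝ) :
    IsOpen (V ∩ g ⁻¹' (Ioi t)) := hV.inter (isOpen_Ioi.preimage hg)

lemma fc_anti (hμfin : μ.m univ < ∞) (hg : Continuous g) {F : Set X} (hF : IsClosed F) :
    Antitone (fc μ g F) := by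
  intro s t hst
  exact ENNReal.toReal_mono (closed_ne_top μ hμfin (fc_closed hg hF s))
    (mono_cc μ (fc_closed hg hF t) (fc_closed hg hF s)
      (inter_subset_inter_right F (preimage_mono (Ici_subset_Ici.mpr hst))))

lemma fo_anti (hμfin : μ.m univ < ∞) (hg : Continuous g) {V : Set X} (hV : IsOpen V) :
    Antitone (fo μ g V) := by
  intro s t hst
  exact ENNReal.toReal_mono (open_ne_top μ hμfin (fo_open hg hV s))
    (mono_oo μ (fo_open hg hV t) (fo_open hg hV s)
      (inter_subset_inter_right V (preimage_mono (Ioi_subset_Ioi hst))))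

lemma fc_nonneg (F : Set X) (t : ℝ) : 0 ≤ fc μ g F t := ENNReal.toReal_nonneg
lemma fo_nonneg (V : Set X) (t : ℝ) : 0 ≤ fo μ g V t := ENNReal.toReal_nonneg

lemma fc_le_M (hμfin : μ.m univ < ∞) (hg : Continuous g) {F : Set X} (hF : IsClosed F) (t : ℝ) :
    fc μ g F t ≤ (μ.m univ).toReal :=
  ENNReal.toReal_mono hμfin.ne
    (mono_cc μ (fc_closed hg hF t) isClosed_univ (subset_univ _))

lemma fo_le_M (hμfin : μ.m univ < ∞) (hg : Continuous g) {V : Set X} (hV : IsOpen V) (t : ℝ) :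
    fo μ g V t ≤ (μ.m univ).toReal :=
  ENNReal.toReal_mono hμfin.ne
    (mono_oc μ (fo_open hg hV t) isClosed_univ (subset_univ _))

/-- real-number helper -/
lemma le_of_forall_pos_le_add' {x y : ℝ} (h : ∀ ε : ℝ, 0 < ε → x ≤ y + ε) : x ≤ y := by
  by_contra hc
  push_neg at hc
  have := h ((x - y) / 2) (by linarith)
  linarith

/-- shifted interval integral of a bounded nonnegative antitone function -/
lemma integral_shift_bound {φ : ℝ → ℝ} (hφ : Antitone φ) {M : ℝ}
    (h0 : ∀ t, 0 ≤ φ t) (hM : ∀ t, φ t ≤ M) (a b c : ℝ) :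
    |(∫ t in a + c..b + c, φ t) - ∫ t in a..b, φ t| ≤ |c| * M := by
  have hMnn : 0 ≤ M := (h0 0).trans (hM 0)
  have hint : ∀ x y : ℝ, IntervalIntegrable φ volume x y := fun x y =>
    hφ.intervalIntegrable
  have hT : ∀ x : ℝ, (∫ t in x..x + c, φ t) ∈ Icc (min 0 (c * M)) (max 0 (c * M)) := by
    intro x
    rcases le_or_gt 0 c with hc | hc
    · constructor
      · exact le_trans (min_le_left _ _)
          (intervalIntegral.integral_nonneg (by linarith) (fun u _ => h0 u))
      · refine le_trans ?_ (le_max_right _ _)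
        calc (∫ t in x..x + c, φ t) ≤ ∫ t in x..x + c, M :=
              intervalIntegral.integral_mono_on (by linarith) (hint _ _)
                intervalIntegrable_const (fun u _ => hM u)
          _ = c * M := by simp [mul_comm]
    · constructor
      · refine le_trans (min_le_right _ _) ?_
        rw [intervalIntegral.integral_symm]
        have : (∫ t in x + c..x, φ t) ≤ ∫ t in x + c..x, M :=
          intervalIntegral.integral_mono_on (by linarith) (hint _ _)
            intervalIntegrable_const (fun u _ => hM u)
        have h2 : (∫ t in x + c..x, M) = -c * M := by rw [intervalIntegral.integral_const, smul_eq_mul]; ring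
        nlinarith [this, h2]
      · refine le_trans ?_ (le_max_left _ _)
        rw [intervalIntegral.integral_symm]
        have : (0:ℝ) ≤ ∫ t in x + c..x, φ t :=
          intervalIntegral.integral_nonneg (by linarith) (fun u _ => h0 u)
        linarith
  have hsplit : (∫ t in a + c..b + c, φ t) - (∫ t in a..b, φ t)
      = (∫ t in b..b + c, φ t) - (∫ t in a..a + c, φ t) := by
    have h1 : (∫ t in a..a + c, φ t) + (∫ t in a + c..b + c, φ t) = ∫ t in a..b + c, φ t :=
      intervalIntegral.integral_add_adjacent_intervals (hint _ _) (hint _ _)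
    have h2 : (∫ t in a..b, φ t) + (∫ t in b..b + c, φ t) = ∫ t in a..b + c, φ t :=
      intervalIntegral.integral_add_adjacent_intervals (hint _ _) (hint _ _)
    linarith
  rw [hsplit]
  obtain ⟨l1, u1⟩ := hT b
  obtain ⟨l2, u2⟩ := hT a
  rw [abs_le]
  have habs : max 0 (c * M) - min 0 (c * M) = |c| * M := by
    rcases le_or_gt 0 c with hc | hc
    · rw [max_eq_right (by positivity), min_eq_left (by positivity), abs_of_nonneg hc]
      ring
    · rw [max_eq_left, min_eq_right, abs_of_neg hc]
      · ring
      · nlinarith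
      · nlinarith
  constructor <;> [nlinarith; nlinarith]


/-- For a closed set inside an open set, the closed-type integral is at most the
open-type integral. -/
lemma integral_fc_le_fo (hμfin : μ.m univ < ∞) (hg : Continuous g) {F V : Set X}
    (hF : IsClosed F) (hV : IsOpen V) (hFV : F ⊆ V) {a b : ℝ} (hab : a ≤ b) :
    (∫ t in a..b, fc μ g F t) ≤ ∫ t in a..b, fo μ g V t := by
  set M := (μ.m univ).toReal with hMdef
  have hM0 : 0 ≤ M := ENNReal.toReal_nonneg
  refine le_of_forall_pos_le_add' ?_
  intro δ hδ
  set δ' := δ / (M + 1) with hδ'def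
  have hδ'0 : 0 < δ' := by positivity
  have hδ'M : δ' * M ≤ δ := by
    rw [hδ'def, div_mul_eq_mul_div, div_le_iff₀ (by linarith)]
    nlinarith
  have hanti2 : Antitone (fun t => fo μ g V (t - δ')) :=
    fun s t hst => fo_anti μ hμfin hg hV (sub_le_sub_right hst _)
  have hpt : ∀ t ∈ Icc a b, fc μ g F t ≤ fo μ g V (t - δ') := by
    intro t _
    refine ENNReal.toReal_mono (open_ne_top μ hμfin (fo_open hg hV _))
      (mono_co μ (fc_closed hg hF t).isCompact (fo_open hg hV _) ?_)
    rintro x ⟨hxF, hxg⟩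
    refine ⟨hFV hxF, ?_⟩
    have : t ≤ g x := hxg
    show t - δ' < g x
    linarith
  have h1 : (∫ t in a..b, fc μ g F t) ≤ ∫ t in a..b, fo μ g V (t - δ') :=
    intervalIntegral.integral_mono_on hab
      (fc_anti μ hμfin hg hF).intervalIntegrable hanti2.intervalIntegrable hpt
  have h2 : (∫ t in a..b, fo μ g V (t - δ')) = ∫ t in a + -δ'..b + -δ', fo μ g V t := by
    rw [intervalIntegral.integral_comp_sub_right (fo μ g V) δ']
    norm_num [sub_eq_add_neg]
  have h3 := integral_shift_bound (fo_anti μ hμfin hg hV) (fo_nonneg μ V)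
    (fo_le_M μ hμfin hg hV) a b (-δ')
  rw [abs_le] at h3
  have habs : |(-δ' : ℝ)| = δ' := by rw [abs_neg, abs_of_pos hδ'0]
  rw [habs] at h3
  linarith [h3.2]

/-- Part 2 key construction: a compact set forcing the lower integral bound. -/
lemma part2_key (hμfin : μ.m univ < ∞) (hg : Continuous g) {U : Set X} (hU : IsOpen U)
    {a b : ℝ} (hab : a ≤ b) (hgb : ∀ x, g x ≤ b) {ε : ℝ} (hε : 0 < ε) :
    ∃ K₁ : Set X, IsCompact K₁ ∧ K₁ ⊆ U ∧ ∀ K : Set X, IsCompact K → K ⊆ U → K₁ ⊆ K →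
      (∫ t in a..b, fo μ g U t) - ε ≤ ∫ t in a..b, fc μ g K t := by
  set M := (μ.m univ).toReal with hMdef
  have hM0 : 0 ≤ M := ENNReal.toReal_nonneg
  rcases eq_or_lt_of_le hab with heq | hlt
  · subst heq
    exact ⟨∅, isCompact_empty, empty_subset U, fun K _ _ _ => by
      simp [intervalIntegral.integral_same]; linarith⟩
  · set ε3 := ε / 3 with hε3def
    have hε3 : 0 < ε3 := by positivity
    set n : ℕ := ⌈(b - a) * M / ε3⌉₊ + 1 with hndef
    have hn0 : 0 < (n : ℝ) := by positivity
    set Δ := (b - a) / n with hΔdef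
    have hΔ0 : 0 < Δ := div_pos (by linarith) hn0
    have hnΔ : (n : ℝ) * Δ = b - a := by
      rw [hΔdef]; field_simp
    have hΔM : Δ * M ≤ ε3 := by
      have h2 : (b - a) * M ≤ (⌈(b - a) * M / ε3⌉₊ : ℝ) * ε3 := by
        have h1 := Nat.le_ceil ((b - a) * M / ε3)
        rw [div_le_iff₀ hε3] at h1
        exact h1
      have h3 : (b - a) * M ≤ (n : ℝ) * ε3 := by
        refine h2.trans ?_
        have : (⌈(b - a) * M / ε3⌉₊ : ℝ) ≤ (n : ℝ) := by
          rw [hndef]; push_cast; linarith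
        nlinarith
      rw [hΔdef, div_mul_eq_mul_div, div_le_iff₀ hn0]
      linarith [h3]
    set ε'' := ε / (3 * (b - a + 1)) with hε''def
    have hε'' : 0 < ε'' := div_pos hε (by linarith)
    have hε''ba : ε'' * (b - a) ≤ ε3 := by
      rw [hε''def, hε3def, div_mul_eq_mul_div, div_le_div_iff₀ (by linarith) (by norm_num)]
      nlinarith
    have hCs : ∀ i : ℕ, ∃ C, IsCompact C ∧ C ⊆ U ∩ g ⁻¹' (Ioi (a + i * Δ)) ∧
        fo μ g U (a + i * Δ) - ε'' < (μ.m C).toReal :=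
      fun i => exists_compact_approx μ hμfin (fo_open hg hU (a + i * Δ)) hε''
    choose C hC1 hC2 hC3 using hCs
    refine ⟨⋃ i ∈ Set.Icc 1 n, C i, (Set.finite_Icc 1 n).isCompact_biUnion (fun i _ => hC1 i),
      iUnion₂_subset fun i _ => (hC2 i).trans inter_subset_left, ?_⟩
    intro K hK hKU hsub
    have hpt : ∀ t ∈ Icc a b, fo μ g U (t + Δ) - ε'' ≤ fc μ g K t := by
      intro t ht
      rcases le_or_gt b (t + Δ) with hb' | hb'
      · have hempty : U ∩ g ⁻¹' (Ioi (t + Δ)) = ∅ := by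
          ext x
          simp only [mem_inter_iff, mem_preimage, mem_Ioi, mem_empty_iff_false, iff_false,
            not_and]
          intro _
          exact not_lt.mpr ((hgb x).trans hb')
        have hzero : fo μ g U (t + Δ) = 0 := by
          rw [fo, hempty, empty_eq_zero μ hμfin, ENNReal.toReal_zero]
        rw [hzero]
        linarith [fc_nonneg μ (g := g) K t]
      · set i : ℕ := ⌊(t - a) / Δ⌋₊ + 1 with hidef
        have hta : 0 ≤ (t - a) / Δ := div_nonneg (by linarith [ht.1]) hΔ0.le
        have hicast : (i : ℝ) = (⌊(t - a) / Δ⌋₊ : ℝ) + 1 := by rw [hidef]; push_cast; ring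
        have h_lt : t - a < (i : ℝ) * Δ := by
          have h := Nat.lt_floor_add_one ((t - a) / Δ)
          have h' : (t - a) / Δ < (i : ℝ) := by rw [hicast]; exact_mod_cast h
          calc t - a = ((t - a) / Δ) * Δ := by field_simp
            _ < (i : ℝ) * Δ := by exact mul_lt_mul_of_pos_right h' hΔ0
        have h_le : (i : ℝ) * Δ ≤ t - a + Δ := by
          have hfl : (⌊(t - a) / Δ⌋₊ : ℝ) ≤ (t - a) / Δ := Nat.floor_le hta
          have h1 : (i : ℝ) * Δ = (⌊(t - a) / Δ⌋₊ : ℝ) * Δ + Δ := by rw [hicast]; ring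
          have h2 : (⌊(t - a) / Δ⌋₊ : ℝ) * Δ ≤ ((t - a) / Δ) * Δ :=
            mul_le_mul_of_nonneg_right hfl hΔ0.le
          have h3 : ((t - a) / Δ) * Δ = t - a := by field_simp
          linarith
        have hi_n : i ≤ n := by
          have h1 : (i : ℝ) * Δ ≤ (n : ℝ) * Δ := by
            rw [hnΔ]; linarith
          have : (i : ℝ) ≤ (n : ℝ) := le_of_mul_le_mul_right (by linarith [h1]) hΔ0
          exact_mod_cast this
        have hi_1 : 1 ≤ i := by rw [hidef]; omega
        have hCK : C i ⊆ K ∩ g ⁻¹' (Ici t) := by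
          intro x hx
          have hxU := hC2 i hx
          have hgx : a + (i : ℝ) * Δ < g x := hxU.2
          refine ⟨hsub (mem_iUnion₂.mpr ⟨i, mem_Icc.mpr ⟨hi_1, hi_n⟩, hx⟩), ?_⟩
          show t ≤ g x
          linarith
        have h5 : (μ.m (C i)).toReal ≤ fc μ g K t :=
          ENNReal.toReal_mono (closed_ne_top μ hμfin (fc_closed hg hK.isClosed t))
            (mono_cc μ (hC1 i).isClosed (fc_closed hg hK.isClosed t) hCK)
        have h6 : fo μ g U (t + Δ) ≤ fo μ g U (a + (i : ℝ) * Δ) :=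
          fo_anti μ hμfin hg hU (by linarith)
        linarith [hC3 i]
    have hanti3 : Antitone (fun t => fo μ g U (t + Δ)) :=
      fun s t hst => fo_anti μ hμfin hg hU (add_le_add_left hst Δ)
    have hanti2 : Antitone (fun t => fo μ g U (t + Δ) - ε'') :=
      fun s t hst => sub_le_sub_right (hanti3 hst) _
    have h7 : (∫ t in a..b, (fo μ g U (t + Δ) - ε'')) ≤ ∫ t in a..b, fc μ g K t :=
      intervalIntegral.integral_mono_on hab hanti2.intervalIntegrable
        (fc_anti μ hμfin hg hK.isClosed).intervalIntegrable (fun t ht => hpt t ht)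
    have h8 : (∫ t in a..b, (fo μ g U (t + Δ) - ε'')) =
        (∫ t in a + Δ..b + Δ, fo μ g U t) - ε'' * (b - a) := by
      rw [intervalIntegral.integral_sub hanti3.intervalIntegrable intervalIntegrable_const,
        intervalIntegral.integral_comp_add_right (fo μ g U) Δ,
        intervalIntegral.integral_const, smul_eq_mul]
      ring
    have h9 := integral_shift_bound (fo_anti μ hμfin hg hU) (fo_nonneg μ U)
      (fo_le_M μ hμfin hg hU) a b Δ
    rw [abs_le, abs_of_pos hΔ0] at h9
    have := h9.1
    rw [hε3def] at hΔM hε''ba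
    linarith [h7, h8, h9.1]

/-- Part 3 key construction: an open set forcing the upper integral bound. -/
lemma part3_key (hμfin : μ.m univ < ∞) (hg : Continuous g) {F : Set X} (hF : IsClosed F)
    {a b : ℝ} (hab : a ≤ b) {ε : ℝ} (hε : 0 < ε) :
    ∃ V₀ : Set X, IsOpen V₀ ∧ F ⊆ V₀ ∧ ∀ V : Set X, IsOpen V → F ⊆ V → V ⊆ V₀ →
      (∫ t in a..b, fo μ g V t) ≤ (∫ t in a..b, fc μ g F t) + ε := by
  set M := (μ.m univ).toReal with hMdef
  have hM0 : 0 ≤ M := ENNReal.toReal_nonneg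
  rcases eq_or_lt_of_le hab with heq | hlt
  · subst heq
    exact ⟨univ, isOpen_univ, subset_univ F, fun V _ _ _ => by
      simp [intervalIntegral.integral_same]; linarith⟩
  · set ε3 := ε / 3 with hε3def
    have hε3 : 0 < ε3 := by positivity
    set n : ℕ := ⌈(b - a) * M / ε3⌉₊ + 1 with hndef
    have hn0 : 0 < (n : ℝ) := by positivity
    set Δ := (b - a) / n with hΔdef
    have hΔ0 : 0 < Δ := div_pos (by linarith) hn0
    have hnΔ : (n : ℝ) * Δ = b - a := by rw [hΔdef]; field_simp
    have hΔM : Δ * M ≤ ε3 := by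
      have h2 : (b - a) * M ≤ (⌈(b - a) * M / ε3⌉₊ : ℝ) * ε3 := by
        have h1 := Nat.le_ceil ((b - a) * M / ε3)
        rw [div_le_iff₀ hε3] at h1
        exact h1
      have h3 : (b - a) * M ≤ (n : ℝ) * ε3 := by
        refine h2.trans ?_
        have : (⌈(b - a) * M / ε3⌉₊ : ℝ) ≤ (n : ℝ) := by
          rw [hndef]; push_cast; linarith
        nlinarith
      rw [hΔdef, div_mul_eq_mul_div, div_le_iff₀ hn0]
      linarith [h3]
    set ε'' := ε / (3 * (b - a + 1)) with hε''def
    have hε'' : 0 < ε'' := div_pos hε (by linarith)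
    have hε''ba : ε'' * (b - a) ≤ ε3 := by
      rw [hε''def, hε3def, div_mul_eq_mul_div, div_le_div_iff₀ (by linarith) (by norm_num)]
      nlinarith
    have hWs : ∀ i : ℕ, ∃ W, IsOpen W ∧ F ∩ g ⁻¹' (Ici (a + i * Δ)) ⊆ W ∧
        (μ.m W).toReal < fc μ g F (a + i * Δ) + ε'' :=
      fun i => exists_open_approx μ hμfin (fc_closed hg hF (a + i * Δ)) hε''
    choose W hW1 hW2 hW3 using hWs
    refine ⟨⋂ i ∈ Set.Iic n, (W i ∪ g ⁻¹' (Iio (a + i * Δ))),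
      (Set.finite_Iic n).isOpen_biInter
        (fun i _ => (hW1 i).union (isOpen_Iio.preimage hg)), ?_, ?_⟩
    · intro x hx
      refine mem_iInter₂.mpr fun i _ => ?_
      rcases le_or_gt (a + (i : ℝ) * Δ) (g x) with hge | hlt'
      · exact Or.inl (hW2 i ⟨hx, hge⟩)
      · exact Or.inr hlt'
    · intro V hV hFV hVV₀
      have hpt : ∀ t ∈ Icc a b, fo μ g V t ≤ fc μ g F (t - Δ) + ε'' := by
        intro t ht
        set i : ℕ := ⌊(t - a) / Δ⌋₊ with hidef
        have hta : 0 ≤ (t - a) / Δ := div_nonneg (by linarith [ht.1]) hΔ0.le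
        have h_le : (i : ℝ) * Δ ≤ t - a := by
          have hfl : (⌊(t - a) / Δ⌋₊ : ℝ) ≤ (t - a) / Δ := Nat.floor_le hta
          calc (i : ℝ) * Δ ≤ ((t - a) / Δ) * Δ := mul_le_mul_of_nonneg_right hfl hΔ0.le
            _ = t - a := by field_simp
        have h_gt : t - Δ < a + (i : ℝ) * Δ := by
          have h := Nat.lt_floor_add_one ((t - a) / Δ)
          have h' : (t - a) / Δ < (i : ℝ) + 1 := by exact_mod_cast h
          have : t - a < ((i : ℝ) + 1) * Δ := by
            calc t - a = ((t - a) / Δ) * Δ := by field_simp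
              _ < ((i : ℝ) + 1) * Δ := mul_lt_mul_of_pos_right h' hΔ0
          linarith [this]
        have hi_n : i ≤ n := by
          have h1 : (i : ℝ) * Δ ≤ (n : ℝ) * Δ := by rw [hnΔ]; linarith [ht.2]
          have : (i : ℝ) ≤ (n : ℝ) := le_of_mul_le_mul_right (by linarith [h1]) hΔ0
          exact_mod_cast this
        have hsubW : V ∩ g ⁻¹' (Ioi t) ⊆ W i := by
          rintro x ⟨hxV, hxg⟩
          have hx0 : x ∈ W i ∪ g ⁻¹' (Iio (a + (i : ℝ) * Δ)) :=
            (biInter_subset_of_mem (mem_Iic.mpr hi_n)) (hVV₀ hxV)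
          rcases hx0 with hx0 | hx0
          · exact hx0
          · exfalso
            have h1 : g x < a + (i : ℝ) * Δ := hx0
            have h2 : t < g x := hxg
            linarith
        have h4 : fo μ g V t ≤ (μ.m (W i)).toReal :=
          ENNReal.toReal_mono
            (((mono_oo μ (hW1 i) isOpen_univ (subset_univ _)).trans_lt hμfin).ne)
            (mono_oo μ (fo_open hg hV t) (hW1 i) hsubW)
        have h6 : fc μ g F (a + (i : ℝ) * Δ) ≤ fc μ g F (t - Δ) :=
          fc_anti μ hμfin hg hF (le_of_lt h_gt)
        linarith [hW3 i]
      have hanti3 : Antitone (fun t => fc μ g F (t - Δ)) :=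
        fun s t hst => fc_anti μ hμfin hg hF (sub_le_sub_right hst _)
      have hanti2 : Antitone (fun t => fc μ g F (t - Δ) + ε'') :=
        fun s t hst => add_le_add_left (hanti3 hst) _
      have h7 : (∫ t in a..b, fo μ g V t) ≤ ∫ t in a..b, (fc μ g F (t - Δ) + ε'') :=
        intervalIntegral.integral_mono_on hab
          (fo_anti μ hμfin hg hV).intervalIntegrable hanti2.intervalIntegrable
          (fun t ht => hpt t ht)
      have h8 : (∫ t in a..b, (fc μ g F (t - Δ) + ε'')) =
          (∫ t in a + -Δ..b + -Δ, fc μ g F t) + ε'' * (b - a) := by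
        rw [intervalIntegral.integral_add hanti3.intervalIntegrable intervalIntegrable_const,
          intervalIntegral.integral_comp_sub_right (fc μ g F) Δ,
          intervalIntegral.integral_const, smul_eq_mul]
        simp [sub_eq_add_neg, mul_comm]
      have h9 := integral_shift_bound (fc_anti μ hμfin hg hF) (fc_nonneg μ F)
        (fc_le_M μ hμfin hg hF) a b (-Δ)
      rw [abs_le, abs_neg, abs_of_pos hΔ0] at h9
      rw [hε3def] at hΔM hε''ba
      linarith [h7, h8, h9.2]

end DTMaux


/-- The quasi-integral of `g` over a closed set `F`:
`ν_g(F) = aμ(F) + ∫_a^b μ(F ∩ g⁻¹([t,∞))) dt`. -/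
noncomputable def nuClosed {X : Type*} [TopologicalSpace X]
    (μ : DeficientTopologicalMeasure X) (g : X → ℝ) (a b : ℝ) (F : Set X) : ℝ :=
  a * (μ.m F).toReal + ∫ t in a..b, (μ.m (F ∩ g ⁻¹' (Ici t))).toReal

/-- The quasi-integral of `g` over an open set `U`:
`ν_g(U) = aμ(U) + ∫_a^b μ(U ∩ g⁻¹((t,∞))) dt`. -/
noncomputable def nuOpen {X : Type*} [TopologicalSpace X]
    (μ : DeficientTopologicalMeasure X) (g : X → ℝ) (a b : ℝ) (U : Set X) : ℝ :=
  a * (μ.m U).toReal + ∫ t in a..b, (μ.m (U ∩ g ⁻¹' (Ioi t))).toReal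

open DTMaux in
/-- On a compact Hausdorff space with `μ(X) < ∞` and `g` continuous with
`g(X) ⊆ [a,b]`, the set function `ν_g` is a signed deficient topological measure with norm
at most `‖g‖_∞ μ(X)`: it is additive on disjoint closed sets, inner regular (as a net limit)
on open sets, outer regular (as a net limit) on closed sets, and `|ν_g(F)| ≤ ‖g‖_∞ μ(X)`. -/
theorem stmt5 {X : Type*} [TopologicalSpace X] [CompactSpace X] [T2Space X]
    (μ : DeficientTopologicalMeasure X) (hμfin : μ.m univ < ∞)
    (g : X → ℝ) (hg : Continuous g) (a b : ℝ) (hgab : ∀ x, g x ∈ Icc a b) :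
    (∀ C K : Set X, IsClosed C → IsClosed K → Disjoint C K →
        nuClosed μ g a b (C ∪ K) = nuClosed μ g a b C + nuClosed μ g a b K) ∧
    (∀ U : Set X, IsOpen U →
        Tendsto (fun K : {K : Set X // IsCompact K ∧ K ⊆ U} => nuClosed μ g a b K.1)
          atTop (nhds (nuOpen μ g a b U))) ∧
    (∀ F : Set X, IsClosed F →
        Tendsto (fun V : {V : Set X // IsOpen V ∧ F ⊆ V} => nuOpen μ g a b V.1)
          atBot (nhds (nuClosed μ g a b F))) ∧
    (∀ F : Set X, IsClosed F →
        |nuClosed μ g a b F| ≤ (⨆ x, |g x|) * (μ.m univ).toReal) := by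

  rcases isEmpty_or_nonempty X with hX | hX
  · -- the space is empty: everything is zero
    have hm0 : ∀ A : Set X, μ.m A = 0 := fun A => by
      rw [Set.eq_empty_of_isEmpty A]; exact empty_eq_zero μ hμfin
    have hc0 : ∀ F : Set X, nuClosed μ g a b F = 0 := fun F => by
      simp [nuClosed, hm0]
    have ho0 : ∀ U : Set X, nuOpen μ g a b U = 0 := fun U => by
      simp [nuOpen, hm0]
    refine ⟨fun C K _ _ _ => by rw [hc0, hc0, hc0]; ring, fun U _ => ?_, fun F _ => ?_,
      fun F _ => ?_⟩
    · have heq : (fun K : {K : Set X // IsCompact K ∧ K ⊆ U} => nuClosed μ g a b K.1)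
          = fun _ => 0 := funext fun K => hc0 _
      rw [heq, ho0]; exact tendsto_const_nhds
    · have heq : (fun V : {V : Set X // IsOpen V ∧ F ⊆ V} => nuOpen μ g a b V.1)
          = fun _ => 0 := funext fun V => ho0 _
      rw [heq, hc0]; exact tendsto_const_nhds
    · rw [hc0, abs_zero]
      have h1 : (μ.m univ).toReal = 0 := by rw [hm0]; simp
      rw [h1, mul_zero]
  · haveI : Nonempty X := hX
    obtain ⟨x0⟩ := hX
    have hab : a ≤ b := (hgab x0).1.trans (hgab x0).2
    have hnuC : ∀ F : Set X, nuClosed μ g a b F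
        = a * (μ.m F).toReal + ∫ t in a..b, fc μ g F t := fun _ => rfl
    have hnuO : ∀ U : Set X, nuOpen μ g a b U
        = a * (μ.m U).toReal + ∫ t in a..b, fo μ g U t := fun _ => rfl
    refine ⟨?_, ?_, ?_, ?_⟩
    · -- Part 1 : additivity on disjoint closed sets
      intro C K hC hK hdisj
      have hadd := μ.additive hC.isCompact hK.isCompact hdisj
      have hint : ∀ t : ℝ, fc μ g (C ∪ K) t = fc μ g C t + fc μ g K t := by
        intro t
        have hdist : ((C ∪ K) ∩ g ⁻¹' (Ici t)) = (C ∩ g ⁻¹' (Ici t)) ∪ (K ∩ g ⁻¹' (Ici t)) :=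
          union_inter_distrib_right _ _ _
        have hdisj2 : Disjoint (C ∩ g ⁻¹' (Ici t)) (K ∩ g ⁻¹' (Ici t)) :=
          hdisj.mono inter_subset_left inter_subset_left
        rw [fc, fc, fc, hdist,
          μ.additive (fc_closed hg hC t).isCompact (fc_closed hg hK t).isCompact hdisj2,
          ENNReal.toReal_add (closed_ne_top μ hμfin (fc_closed hg hC t))
            (closed_ne_top μ hμfin (fc_closed hg hK t))]
      rw [hnuC, hnuC, hnuC]
      have hic : (∫ t in a..b, fc μ g (C ∪ K) t) = ∫ t in a..b, (fc μ g C t + fc μ g K t) :=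
        intervalIntegral.integral_congr (fun t _ => hint t)
      rw [hic, intervalIntegral.integral_add (fc_anti μ hμfin hg hC).intervalIntegrable
        (fc_anti μ hμfin hg hK).intervalIntegrable, hadd,
        ENNReal.toReal_add (closed_ne_top μ hμfin hC) (closed_ne_top μ hμfin hK)]
      ring
    · -- Part 2 : inner regularity as a net limit
      intro U hU
      rw [Metric.tendsto_nhds]
      intro ε hε
      set ε₁ := ε / (4 * (|a| + 1)) with hε₁def
      have hε₁ : 0 < ε₁ := div_pos hε (by positivity)
      obtain ⟨C₀, hC₀c, hC₀U, hC₀⟩ := exists_compact_approx μ hμfin hU hε₁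
      obtain ⟨K₁, hK₁c, hK₁U, hKey⟩ := part2_key μ hμfin hg hU hab (fun x => (hgab x).2)
        (show (0:ℝ) < ε/4 by linarith)
      have hmem := Filter.Ici_mem_atTop (α := {K : Set X // IsCompact K ∧ K ⊆ U})
        ⟨C₀ ∪ K₁, hC₀c.union hK₁c, union_subset hC₀U hK₁U⟩
      filter_upwards [hmem] with K hK
      obtain ⟨Ks, hKc, hKU⟩ := K
      have hK' : C₀ ∪ K₁ ⊆ Ks := hK
      have h1 := hKey Ks hKc hKU (subset_union_right.trans hK')
      have h2 := integral_fc_le_fo μ hμfin hg hKc.isClosed hU hKU hab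
      have hKfin : μ.m Ks ≠ ∞ := closed_ne_top μ hμfin hKc.isClosed
      have hUfin : μ.m U ≠ ∞ := open_ne_top μ hμfin hU
      have h3 : (μ.m U).toReal - ε₁ < (μ.m Ks).toReal :=
        hC₀.trans_le (ENNReal.toReal_mono hKfin
          (mono_cc μ hC₀c.isClosed hKc.isClosed (subset_union_left.trans hK')))
      have h4 : (μ.m Ks).toReal ≤ (μ.m U).toReal :=
        ENNReal.toReal_mono hUfin (mono_co μ hKc hU hKU)
      rw [Real.dist_eq]
      have e1 : |a * ((μ.m Ks).toReal - (μ.m U).toReal)| ≤ |a| * ε₁ := by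
        rw [abs_mul]
        refine mul_le_mul_of_nonneg_left ?_ (abs_nonneg a)
        rw [abs_le]; constructor <;> linarith
      have e2 : |a| * ε₁ ≤ ε / 4 := by
        rw [hε₁def, ← mul_div_assoc, div_le_div_iff₀ (by positivity) (by norm_num)]
        nlinarith [abs_nonneg a, hε.le]
      obtain ⟨ea1, ea2⟩ := abs_le.mp e1
      have ee : a * (μ.m Ks).toReal - a * (μ.m U).toReal
          = a * ((μ.m Ks).toReal - (μ.m U).toReal) := by ring
      rw [hnuC, hnuO, abs_lt]
      constructor <;> nlinarith [ea1, ea2, h1, h2, e2, hε, ee]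
    · -- Part 3 : outer regularity as a net limit
      intro F hF
      rw [Metric.tendsto_nhds]
      intro ε hε
      set ε₁ := ε / (4 * (|a| + 1)) with hε₁def
      have hε₁ : 0 < ε₁ := div_pos hε (by positivity)
      obtain ⟨W₀, hW₀o, hFW₀, hW₀⟩ := exists_open_approx μ hμfin hF hε₁
      obtain ⟨V₁, hV₁o, hFV₁, hKey⟩ := part3_key μ hμfin hg hF hab
        (show (0:ℝ) < ε/4 by linarith)
      have hmem := Filter.Iic_mem_atBot (α := {V : Set X // IsOpen V ∧ F ⊆ V})
        ⟨W₀ ∩ V₁, hW₀o.inter hV₁o, subset_inter hFW₀ hFV₁⟩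
      filter_upwards [hmem] with V hV
      obtain ⟨Vs, hVo, hFV⟩ := V
      have hV' : Vs ⊆ W₀ ∩ V₁ := hV
      have h1 := hKey Vs hVo hFV (hV'.trans inter_subset_right)
      have h2 := integral_fc_le_fo μ hμfin hg hF hVo hFV hab
      have hW₀fin : μ.m W₀ ≠ ∞ := open_ne_top μ hμfin hW₀o
      have h3 : (μ.m Vs).toReal < (μ.m F).toReal + ε₁ :=
        lt_of_le_of_lt (ENNReal.toReal_mono hW₀fin
          (mono_oo μ hVo hW₀o (hV'.trans inter_subset_left))) hW₀
      have h4 : (μ.m F).toReal ≤ (μ.m Vs).toReal :=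
        ENNReal.toReal_mono (open_ne_top μ hμfin hVo) (mono_co μ hF.isCompact hVo hFV)
      rw [Real.dist_eq]
      have e1 : |a * ((μ.m Vs).toReal - (μ.m F).toReal)| ≤ |a| * ε₁ := by
        rw [abs_mul]
        refine mul_le_mul_of_nonneg_left ?_ (abs_nonneg a)
        rw [abs_le]; constructor <;> linarith
      have e2 : |a| * ε₁ ≤ ε / 4 := by
        rw [hε₁def, ← mul_div_assoc, div_le_div_iff₀ (by positivity) (by norm_num)]
        nlinarith [abs_nonneg a, hε.le]
      obtain ⟨ea1, ea2⟩ := abs_le.mp e1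
      have ee : a * (μ.m Vs).toReal - a * (μ.m F).toReal
          = a * ((μ.m Vs).toReal - (μ.m F).toReal) := by ring
      rw [hnuC, hnuO, abs_lt]
      constructor <;> nlinarith [ea1, ea2, h1, h2, e2, hε, ee]
    · -- Part 4 : norm bound
      intro F hF
      have hM0 : (0:ℝ) ≤ (μ.m univ).toReal := ENNReal.toReal_nonneg
      have hmF0 : (0:ℝ) ≤ (μ.m F).toReal := ENNReal.toReal_nonneg
      have hmFM : (μ.m F).toReal ≤ (μ.m univ).toReal :=
        ENNReal.toReal_mono hμfin.ne (mono_cc μ hF isClosed_univ (subset_univ F))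
      have hbddg : BddAbove (range g) := ⟨b, by rintro y ⟨x, rfl⟩; exact (hgab x).2⟩
      have hbddb : BddBelow (range g) := ⟨a, by rintro y ⟨x, rfl⟩; exact (hgab x).1⟩
      have hbddabs : BddAbove (range fun x => |g x|) := ⟨max |a| |b|, by
        rintro y ⟨x, rfl⟩
        have h1 := le_abs_self b
        have h2 := neg_abs_le a
        have h3 := le_max_left |a| |b|
        have h4 := le_max_right |a| |b|
        have h5 := (hgab x).1
        have h6 := (hgab x).2
        rw [abs_le]; constructor <;> linarith⟩
      set S := ⨆ x, |g x| with hSdef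
      set b' := ⨆ x, g x with hb'def
      set a' := ⨅ x, g x with ha'def
      have hS0 : 0 ≤ S := le_trans (abs_nonneg (g x0)) (le_ciSup hbddabs x0)
      have hab' : a ≤ b' := le_trans (hgab x0).1 (le_ciSup hbddg x0)
      have hb'b : b' ≤ b := ciSup_le fun x => (hgab x).2
      have haa' : a ≤ a' := le_ciInf fun x => (hgab x).1
      have ha'b : a' ≤ b := le_trans (ciInf_le hbddb x0) (hgab x0).2
      have hb'S : b' ≤ S := ciSup_le fun x => le_trans (le_abs_self _) (le_ciSup hbddabs x)
      have ha'S : -S ≤ a' := le_ciInf fun x => by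
        have h1 := le_ciSup hbddabs x
        have h2 := neg_abs_le (g x)
        linarith
      have hga' : ∀ x, a' ≤ g x := fun x => ciInf_le hbddb x
      have hgb' : ∀ x, g x ≤ b' := fun x => le_ciSup hbddg x
      have hint : ∀ u v : ℝ, IntervalIntegrable (fc μ g F) volume u v :=
        fun u v => (fc_anti μ hμfin hg hF).intervalIntegrable
      have hfcle : ∀ t : ℝ, fc μ g F t ≤ (μ.m F).toReal := fun t =>
        ENNReal.toReal_mono (closed_ne_top μ hμfin hF)
          (mono_cc μ (fc_closed hg hF t) hF inter_subset_left)
      -- upper bound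
      have hsplit1 : (∫ t in a..b, fc μ g F t) =
          (∫ t in a..b', fc μ g F t) + ∫ t in b'..b, fc μ g F t :=
        (intervalIntegral.integral_add_adjacent_intervals (hint _ _) (hint _ _)).symm
      have hzero : (∫ t in b'..b, fc μ g F t) = 0 := by
        have hae : ∀ᵐ t ∂(volume : Measure ℝ), t ∈ Set.uIoc b' b → fc μ g F t = (0:ℝ) := by
          refine Filter.Eventually.of_forall ?_
          intro t ht
          rw [Set.uIoc_of_le hb'b] at ht
          have hFt : F ∩ g ⁻¹' (Ici t) = ∅ := by
            ext x
            simp only [mem_inter_iff, mem_preimage, mem_Ici, mem_empty_iff_false, iff_false,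
              not_and]
            intro _
            exact not_le.mpr (lt_of_le_of_lt (hgb' x) ht.1)
          rw [fc, hFt, empty_eq_zero μ hμfin, ENNReal.toReal_zero]
        rw [intervalIntegral.integral_congr_ae hae]
        simp
      have hub1 : (∫ t in a..b', fc μ g F t) ≤ (b' - a) * (μ.m F).toReal := by
        calc (∫ t in a..b', fc μ g F t) ≤ ∫ _t in a..b', (μ.m F).toReal :=
              intervalIntegral.integral_mono_on hab' (hint _ _) intervalIntegrable_const
                (fun t _ => hfcle t)
          _ = (b' - a) * (μ.m F).toReal := by
              rw [intervalIntegral.integral_const, smul_eq_mul]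
      have hmul1 : b' * (μ.m F).toReal ≤ S * (μ.m F).toReal :=
        mul_le_mul_of_nonneg_right hb'S hmF0
      have hmul2 : S * (μ.m F).toReal ≤ S * (μ.m univ).toReal :=
        mul_le_mul_of_nonneg_left hmFM hS0
      have hub : nuClosed μ g a b F ≤ S * (μ.m univ).toReal := by
        rw [hnuC, hsplit1]
        nlinarith [hub1, hzero, hmul1, hmul2]
      -- lower bound
      have hsplit2 : (∫ t in a..b, fc μ g F t) =
          (∫ t in a..a', fc μ g F t) + ∫ t in a'..b, fc μ g F t :=
        (intervalIntegral.integral_add_adjacent_intervals (hint _ _) (hint _ _)).symm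
      have hconst : (∫ t in a..a', fc μ g F t) = (a' - a) * (μ.m F).toReal := by
        have heq : EqOn (fc μ g F) (fun _ => (μ.m F).toReal) (uIcc a a') := by
          intro t ht
          rw [Set.uIcc_of_le haa'] at ht
          show fc μ g F t = (μ.m F).toReal
          have hFe : F ∩ g ⁻¹' (Ici t) = F := inter_eq_left.mpr fun x _ => by
            simp only [mem_preimage, mem_Ici]
            exact le_trans ht.2 (hga' x)
          rw [fc, hFe]
        rw [intervalIntegral.integral_congr heq, intervalIntegral.integral_const, smul_eq_mul]
      have hnn : (0:ℝ) ≤ ∫ t in a'..b, fc μ g F t :=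
        intervalIntegral.integral_nonneg ha'b (fun u _ => fc_nonneg μ F u)
      have hmul3 : -S * (μ.m F).toReal ≤ a' * (μ.m F).toReal :=
        mul_le_mul_of_nonneg_right ha'S hmF0
      have hlb : -(S * (μ.m univ).toReal) ≤ nuClosed μ g a b F := by
        rw [hnuC, hsplit2]
        nlinarith [hconst, hnn, hmul3, hmul2]
      exact abs_le.mpr ⟨hlb, hub⟩
end

section
/- Let μ be a deficient topological measure on a locally compact Hausdorff space X with μ(X) < ∞ and g ∈ C₀⁺(X). Then for every compact set K, ∫₀^∞ μ(K ∩ g⁻¹([t,∞))) dt = inf{ ∫₀^∞ μ((fg)⁻¹([t,∞))) dt : f ∈ C_c(X), 0 ≤ f ≤ 1, f = 1 on K }. -/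
open MeasureTheory Set Filter Topology ENNReal

namespace DeficientTopologicalMeasure

variable {X : Type*} [TopologicalSpace X] (μ : DeficientTopologicalMeasure X)

lemma mono_co {C U : Set X} (hC : IsCompact C) (hU : IsOpen U) (h : C ⊆ U) :
    μ.m C ≤ μ.m U := by
  rw [μ.innerRegular hU]
  exact le_iSup_of_le C (le_iSup_of_le hC (le_iSup_of_le h le_rfl))

lemma mono_cf {C F : Set X} (hC : IsCompact C) (hF : IsClosed F) (h : C ⊆ F) :
    μ.m C ≤ μ.m F := by
  rw [μ.outerRegular hF]
  exact le_iInf fun U => le_iInf fun hU => le_iInf fun hFU => μ.mono_co hC hU (h.trans hFU)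

lemma closed_le_univ {F : Set X} (hF : IsClosed F) : μ.m F ≤ μ.m univ := by
  rw [μ.outerRegular hF]
  exact iInf_le_of_le univ (iInf_le_of_le isOpen_univ (iInf_le_of_le (subset_univ F) le_rfl))

lemma empty_eq_zero (hfin : μ.m univ < ∞) : μ.m ∅ = 0 := by
  have h := μ.additive isCompact_empty isCompact_empty (by simp)
  rw [union_empty] at h
  have hne : μ.m ∅ ≠ ∞ := ((μ.closed_le_univ isClosed_empty).trans_lt hfin).ne
  nth_rewrite 1 [← add_zero (μ.m ∅)] at h
  exact ((ENNReal.add_right_inj hne).mp h).symm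

lemma exists_open_superset (hfin : μ.m univ < ∞) {F : Set X} (hF : IsClosed F) {ε : ℝ≥0∞}
    (hε : ε ≠ 0) : ∃ U, IsOpen U ∧ F ⊆ U ∧ μ.m U ≤ μ.m F + ε := by
  have hFfin : μ.m F ≠ ∞ := ((μ.closed_le_univ hF).trans_lt hfin).ne
  have hlt : μ.m F < μ.m F + ε := ENNReal.lt_add_right hFfin hε
  nth_rewrite 1 [μ.outerRegular hF] at hlt
  simp only [iInf_lt_iff] at hlt
  obtain ⟨U, hU, hFU, hUlt⟩ := hlt
  exact ⟨U, hU, hFU, hUlt.le⟩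

end DeficientTopologicalMeasure

/-- Let `μ` be a finite deficient topological measure on a locally compact
Hausdorff space and `g ∈ C₀⁺(X)`. Then for every compact `K`,
`∫₀^∞ μ(K ∩ g⁻¹([t,∞))) dt = inf{ ∫₀^∞ μ((fg)⁻¹([t,∞))) dt : f ∈ C_c(X), 0 ≤ f ≤ 1,
f = 1 on K }`. -/
theorem stmt11 {X : Type*} [TopologicalSpace X] [LocallyCompactSpace X] [T2Space X]
    (μ : DeficientTopologicalMeasure X) (hμfin : μ.m univ < ∞)
    (g : X → ℝ) (hg : Continuous g) (hg0 : ∀ x, 0 ≤ g x)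
    (hginf : Tendsto g (cocompact X) (nhds 0))
    (K : Set X) (hK : IsCompact K) :
    (∫⁻ t in Ioi (0 : ℝ), μ.m (K ∩ g ⁻¹' (Ici t))) =
      ⨅ (f : X → ℝ) (_ : Continuous f) (_ : HasCompactSupport f)
        (_ : ∀ x, f x ∈ Icc (0 : ℝ) 1) (_ : ∀ x ∈ K, f x = 1),
        ∫⁻ t in Ioi (0 : ℝ), μ.m ((fun x => f x * g x) ⁻¹' (Ici t)) := by
  classical
  set L : ℝ → ℝ≥0∞ := fun t => μ.m (K ∩ g ⁻¹' Ici t) with hLdef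
  -- a bound `M` for `g`
  obtain ⟨S, hScpt, hS⟩ : ∃ S : Set X, IsCompact S ∧ Sᶜ ⊆ g ⁻¹' Iio 1 := by
    have h := hginf (Iio_mem_nhds one_pos)
    rw [mem_map, mem_cocompact] at h
    obtain ⟨S, h1, h2⟩ := h
    exact ⟨S, h1, h2⟩
  set M : ℝ := max 1 (sSup (g '' S)) with hMdef
  have hM1 : (1 : ℝ) ≤ M := le_max_left _ _
  have hgM : ∀ x, g x ≤ M := by
    intro x
    by_cases hx : x ∈ S
    · exact le_trans (le_csSup (hScpt.image hg).bddAbove (mem_image_of_mem g hx))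
        (le_max_right _ _)
    · exact le_trans (le_of_lt (hS hx)) hM1
  have hFcl : ∀ t : ℝ, IsClosed (g ⁻¹' Ici t) := fun t => isClosed_Ici.preimage hg
  have hFcpt : ∀ t : ℝ, 0 < t → IsCompact (g ⁻¹' Ici t) := by
    intro t ht
    have h := hginf (Iio_mem_nhds ht)
    rw [mem_map, mem_cocompact] at h
    obtain ⟨S', hS', hsub⟩ := h
    refine hS'.of_isClosed_subset (hFcl t) ?_
    intro x hx
    by_contra hxS
    exact absurd (hsub hxS) (by simpa using hx)
  have hKFcpt : ∀ t : ℝ, IsCompact (K ∩ g ⁻¹' Ici t) := fun t => hK.inter_right (hFcl t)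
  have hμe : μ.m ∅ = 0 := μ.empty_eq_zero hμfin
  have hLanti : Antitone L := by
    intro s t hst
    exact μ.mono_cf (hKFcpt t) (hKFcpt s).isClosed
      (inter_subset_inter_right _ (preimage_mono (Ici_subset_Ici.mpr hst)))
  have hLle : ∀ t, L t ≤ μ.m univ := fun t => μ.closed_le_univ (hKFcpt t).isClosed
  have hLzero : ∀ t : ℝ, M < t → L t = 0 := by
    intro t ht
    have he : K ∩ g ⁻¹' Ici t = ∅ := by
      apply eq_empty_of_forall_notMem
      rintro x ⟨_, hx2⟩
      simp only [mem_preimage, mem_Ici] at hx2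
      linarith [hgM x]
    simp only [hLdef, he, hμe]
  have hsplitM : ∫⁻ t in Ioi (0 : ℝ), L t = (∫⁻ t in Ioc (0 : ℝ) M, L t) + ∫⁻ t in Ioi M, L t := by
    rw [← lintegral_union measurableSet_Ioi Ioc_disjoint_Ioi_same,
      Ioc_union_Ioi_eq_Ioi (by linarith : (0 : ℝ) ≤ M)]
  have hIoiM : ∫⁻ t in Ioi M, L t = 0 := by
    rw [setLIntegral_congr_fun measurableSet_Ioi
      (fun t ht => hLzero t ht)]
    simp
  have hLfin : ∫⁻ t in Ioi (0 : ℝ), L t < ∞ := by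
    rw [hsplitM, hIoiM, add_zero]
    calc ∫⁻ t in Ioc (0 : ℝ) M, L t ≤ ∫⁻ _ in Ioc (0 : ℝ) M, μ.m univ :=
          setLIntegral_mono' measurableSet_Ioc fun t _ => hLle t
      _ = μ.m univ * volume (Ioc (0 : ℝ) M) := setLIntegral_const _ _
      _ < ∞ := by
          rw [Real.volume_Ioc]
          exact ENNReal.mul_lt_top hμfin ENNReal.ofReal_lt_top
  refine le_antisymm ?_ ?_
  ·
    refine le_iInf fun f => le_iInf fun hfc => le_iInf fun hfs => le_iInf fun hf01 =>
      le_iInf fun hfK => ?_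
    refine lintegral_mono fun t => ?_
    refine μ.mono_cf (hKFcpt t) (isClosed_Ici.preimage (hfc.mul hg)) ?_
    rintro x ⟨hxK, hxg⟩
    simp only [mem_preimage, mem_Ici] at hxg ⊢
    rw [hfK x hxK, one_mul]
    exact hxg
  · -- iInf ≤ LHS
    refine ENNReal.le_of_forall_pos_le_add fun ε hε _ => ?_
    set εh : ℝ≥0∞ := (ε : ℝ≥0∞) / 2 with hεhdef
    have hεh0 : εh ≠ 0 :=
      (ENNReal.div_pos (by exact_mod_cast hε.ne') ENNReal.ofNat_ne_top).ne'
    have hεhtop : εh ≠ ∞ :=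
      (ENNReal.div_lt_top ENNReal.coe_ne_top two_ne_zero).ne
    set ε' : ℝ≥0∞ := εh / ENNReal.ofReal (M + 1) with hε'def
    have hε'0 : ε' ≠ 0 := (ENNReal.div_pos hεh0 ENNReal.ofReal_ne_top).ne'
    have hε'M : ε' * ENNReal.ofReal M ≤ εh := by
      calc ε' * ENNReal.ofReal M ≤ ε' * ENNReal.ofReal (M + 1) := by
            exact mul_le_mul_right (ENNReal.ofReal_le_ofReal (by linarith)) _
        _ = εh := ENNReal.div_mul_cancel (by positivity) ENNReal.ofReal_ne_top
    set δ : ℝ := (εh / (μ.m univ + 1)).toReal with hδdef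
    have hμ1top : μ.m univ + 1 ≠ ∞ := ENNReal.add_ne_top.mpr ⟨hμfin.ne, ENNReal.one_ne_top⟩
    have hμ10 : μ.m univ + 1 ≠ 0 := by simp
    have hδfin : εh / (μ.m univ + 1) ≠ ∞ := by
      simp [ENNReal.div_eq_top, hεhtop, hμ10]
    have hδ0 : 0 < δ := ENNReal.toReal_pos (ENNReal.div_pos hεh0 hμ1top).ne' hδfin
    have hδμ : ENNReal.ofReal δ * μ.m univ ≤ εh := by
      rw [hδdef, ENNReal.ofReal_toReal hδfin]
      calc εh / (μ.m univ + 1) * μ.m univ ≤ εh / (μ.m univ + 1) * (μ.m univ + 1) :=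
            mul_le_mul_right le_self_add _
        _ = εh := ENNReal.div_mul_cancel hμ10 hμ1top
    set n : ℕ := ⌈M / δ⌉₊ with hndef
    have hUex : ∀ i : ℕ, ∃ U, IsOpen U ∧ K ∩ g ⁻¹' Ici ((i : ℝ) * δ) ⊆ U ∧
        μ.m U ≤ L ((i : ℝ) * δ) + ε' :=
      fun i => μ.exists_open_superset hμfin (hKFcpt _).isClosed hε'0
    choose U hUopen hUsub hUle using hUex
    set W : Set X := ⋂ i ∈ Finset.Icc 1 n, (U i ∪ {x | g x < (i : ℝ) * δ}) with hWdef
    have hWopen : IsOpen W :=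
      isOpen_biInter_finset fun i _ => (hUopen i).union (isOpen_lt hg continuous_const)
    have hKW : K ⊆ W := by
      intro x hx
      refine mem_iInter₂.mpr fun i _ => ?_
      by_cases hgx : (i : ℝ) * δ ≤ g x
      · exact Or.inl (hUsub i ⟨hx, hgx⟩)
      · exact Or.inr (lt_of_not_ge hgx)
    obtain ⟨f, hf1, hf0, hfsupp, hf01⟩ :=
      exists_continuous_one_zero_of_isCompact hK hWopen.isClosed_compl
        (disjoint_compl_right.mono_left hKW)
    set R : ℝ → ℝ≥0∞ := fun t => μ.m ((fun x => f x * g x) ⁻¹' Ici t) with hRdef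
    have hfg_le : ∀ x, f x * g x ≤ g x := fun x =>
      mul_le_of_le_one_left (hg0 x) (hf01 x).2
    have hRcl : ∀ t : ℝ, IsClosed ((fun x => f x * g x) ⁻¹' Ici t) :=
      fun t => isClosed_Ici.preimage (f.continuous.mul hg)
    have hRsubg : ∀ t : ℝ, (fun x => f x * g x) ⁻¹' Ici t ⊆ g ⁻¹' Ici t := by
      intro t x hx
      simp only [mem_preimage, mem_Ici] at hx ⊢
      exact le_trans hx (hfg_le x)
    have hRcpt : ∀ t : ℝ, 0 < t → IsCompact ((fun x => f x * g x) ⁻¹' Ici t) :=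
      fun t ht => (hFcpt t ht).of_isClosed_subset (hRcl t) (hRsubg t)
    have hRuniv : ∀ t, R t ≤ μ.m univ := fun t => μ.closed_le_univ (hRcl t)
    have hRW : ∀ t : ℝ, 0 < t → (fun x => f x * g x) ⁻¹' Ici t ⊆ W := by
      intro t ht x hx
      simp only [mem_preimage, mem_Ici] at hx
      by_contra hxW
      have hfx : f x = 0 := hf0 hxW
      rw [hfx, zero_mul] at hx
      linarith
    -- key pointwise estimate
    have hkey : ∀ s : ℝ, 0 < s → s ≤ M → R (s + δ) ≤ L s + ε' := by
      intro s hs hsM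
      set i : ℕ := ⌈s / δ⌉₊ with hidef
      have hi1 : 1 ≤ i := Nat.ceil_pos.mpr (div_pos hs hδ0)
      have hin : i ≤ n := Nat.ceil_le_ceil (by gcongr)
      have hsi : s ≤ (i : ℝ) * δ := (div_le_iff₀ hδ0).mp (Nat.le_ceil _)
      have his : (i : ℝ) * δ ≤ s + δ := by
        have h1 : (i : ℝ) ≤ s / δ + 1 := (Nat.ceil_lt_add_one (by positivity)).le
        calc (i : ℝ) * δ ≤ (s / δ + 1) * δ := mul_le_mul_of_nonneg_right h1 hδ0.le
          _ = s + δ := by field_simp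
      have hsub : (fun x => f x * g x) ⁻¹' Ici (s + δ) ⊆ U i := by
        intro x hx
        have hxW : x ∈ W := hRW _ (by linarith) hx
        have hxg : (i : ℝ) * δ ≤ g x := le_trans his (hRsubg _ hx)
        rcases mem_iInter₂.mp hxW i (Finset.mem_Icc.mpr ⟨hi1, hin⟩) with h | h
        · exact h
        · exact absurd hxg (not_le.mpr h)
      calc R (s + δ) ≤ μ.m (U i) := μ.mono_co (hRcpt _ (by linarith)) (hUopen i) hsub
        _ ≤ L ((i : ℝ) * δ) + ε' := hUle i
        _ ≤ L s + ε' := add_le_add_left (hLanti hsi) _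
    -- integration
    have hsplit1 : ∫⁻ t in Ioi (0 : ℝ), R t =
        (∫⁻ t in Ioc (0 : ℝ) δ, R t) + ∫⁻ t in Ioi δ, R t := by
      rw [← lintegral_union measurableSet_Ioi Ioc_disjoint_Ioi_same,
        Ioc_union_Ioi_eq_Ioi hδ0.le]
    have hb1 : ∫⁻ t in Ioc (0 : ℝ) δ, R t ≤ ENNReal.ofReal δ * μ.m univ := by
      calc ∫⁻ t in Ioc (0 : ℝ) δ, R t ≤ ∫⁻ _ in Ioc (0 : ℝ) δ, μ.m univ :=
            setLIntegral_mono' measurableSet_Ioc fun t _ => hRuniv t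
        _ = μ.m univ * volume (Ioc (0 : ℝ) δ) := setLIntegral_const _ _
        _ = ENNReal.ofReal δ * μ.m univ := by rw [Real.volume_Ioc, sub_zero, mul_comm]
    have hchg : ∫⁻ t in Ioi δ, R t = ∫⁻ s in Ioi (0 : ℝ), R (s + δ) := by
      have hmp : MeasurePreserving (fun s : ℝ => s + δ) volume volume :=
        measurePreserving_add_right volume δ
      have h := hmp.setLIntegral_comp_preimage_emb
        (MeasurableEquiv.addRight δ).measurableEmbedding R (Ioi δ)
      rw [← h]
      congr 1
      ext a
      simp [lt_add_iff_pos_left]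
    have hsplit2 : ∫⁻ s in Ioi (0 : ℝ), R (s + δ) =
        (∫⁻ s in Ioc (0 : ℝ) M, R (s + δ)) + ∫⁻ s in Ioi M, R (s + δ) := by
      rw [← lintegral_union measurableSet_Ioi Ioc_disjoint_Ioi_same,
        Ioc_union_Ioi_eq_Ioi (by linarith : (0 : ℝ) ≤ M)]
    have hzero : ∀ s ∈ Ioi M, R (s + δ) = (0 : ℝ≥0∞) := by
      intro s hs
      have he : (fun x => f x * g x) ⁻¹' Ici (s + δ) = ∅ := by
        apply eq_empty_of_forall_notMem
        intro x hx
        simp only [mem_preimage, mem_Ici] at hx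
        have := hfg_le x
        have := hgM x
        simp only [mem_Ioi] at hs
        linarith
      simp only [hRdef, he, hμe]
    have hb3 : ∫⁻ s in Ioi M, R (s + δ) = 0 := by
      calc ∫⁻ s in Ioi M, R (s + δ) = ∫⁻ _ in Ioi M, (0 : ℝ≥0∞) :=
            setLIntegral_congr_fun measurableSet_Ioi hzero
        _ = 0 := lintegral_zero
    have hb2 : ∫⁻ s in Ioc (0 : ℝ) M, R (s + δ) ≤
        (∫⁻ s in Ioi (0 : ℝ), L s) + ε' * ENNReal.ofReal M := by
      calc ∫⁻ s in Ioc (0 : ℝ) M, R (s + δ) ≤ ∫⁻ s in Ioc (0 : ℝ) M, (L s + ε') :=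
            setLIntegral_mono' measurableSet_Ioc fun s hs => hkey s hs.1 hs.2
        _ = (∫⁻ s in Ioc (0 : ℝ) M, L s) + ∫⁻ _ in Ioc (0 : ℝ) M, ε' :=
            lintegral_add_right _ measurable_const
        _ ≤ (∫⁻ s in Ioi (0 : ℝ), L s) + ε' * ENNReal.ofReal M := by
            gcongr
            · exact Ioc_subset_Ioi_self
            · rw [setLIntegral_const, Real.volume_Ioc, sub_zero]
    -- assemble
    have hRtot : ∫⁻ t in Ioi (0 : ℝ), R t ≤ (∫⁻ t in Ioi (0 : ℝ), L t) + ε := by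
      calc ∫⁻ t in Ioi (0 : ℝ), R t
          = (∫⁻ t in Ioc (0 : ℝ) δ, R t) + ∫⁻ t in Ioi δ, R t := hsplit1
        _ ≤ ENNReal.ofReal δ * μ.m univ +
            ((∫⁻ s in Ioi (0 : ℝ), L s) + ε' * ENNReal.ofReal M) := by
            rw [hchg, hsplit2, hb3, add_zero]
            exact add_le_add hb1 hb2
        _ ≤ εh + ((∫⁻ s in Ioi (0 : ℝ), L s) + εh) := add_le_add hδμ (add_le_add_right hε'M _)
        _ = (∫⁻ t in Ioi (0 : ℝ), L t) + (εh + εh) := by ring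
        _ = (∫⁻ t in Ioi (0 : ℝ), L t) + ε := by
            rw [hεhdef, ENNReal.add_halves]
    refine le_trans ?_ hRtot
    exact iInf_le_of_le (⇑f) (iInf_le_of_le f.continuous (iInf_le_of_le hfsupp
      (iInf_le_of_le hf01 (iInf_le_of_le (fun x hx => hf1 hx) le_rfl))))
end
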